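/- Let X, X₁ ∈ ℝ^{N×d}, let c > 0 (playing the role of sλ), suppose d_𝓜(X₁) ≤ c·d_𝓜(X) with d_𝓜(X₁) > 0, and let ρ ∈ (0,1) satisfy ρ(1/c + 1) > 2. Then the expected SkipNode output is strictly farther from 𝓜 than the vanilla output: d_𝓜((1−ρ)X₁ + ρX) / d_𝓜(X₁) ≥ ρ(1/c + 1) − 1 > 1, and in particular d_𝓜((1−ρ)X₁ + ρX) > d_𝓜(X₁). -/
import Mathlib


open scoped BigOperators

/-- The Frobenius norm of a real `N × d` matrix. -/
noncomputable def fNorm {N d : ℕ} (X : Matrix (Fin N) (Fin d) ℝ) : ℝ :=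
  Real.sqrt (∑ i, ∑ j, (X i j) ^ 2)

/-- The distance (in Frobenius norm) from a matrix `X` to the subspace
`𝓜 = {∑ m, e m ⊗ w m | w m ∈ ℝ^d}` determined by the family `e` of vectors in `ℝ^N`. -/
noncomputable def distM {N d M : ℕ} (e : Fin M → Fin N → ℝ)
    (X : Matrix (Fin N) (Fin d) ℝ) : ℝ :=
  sInf {r : ℝ | ∃ w : Fin M → Fin d → ℝ,
    r = fNorm (X - Matrix.of fun i j => ∑ m, e m i * w m j)}

noncomputable def toEuc {N d : ℕ} (X : Matrix (Fin N) (Fin d) ℝ) :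
    EuclideanSpace ℝ (Fin N × Fin d) :=
  (WithLp.equiv 2 _).symm (fun p => X p.1 p.2)

lemma fNorm_eq {N d : ℕ} (X : Matrix (Fin N) (Fin d) ℝ) : fNorm X = ‖toEuc X‖ := by
  rw [EuclideanSpace.norm_eq]
  simp [fNorm, toEuc, Fintype.sum_prod_type, Real.norm_eq_abs, sq_abs]

lemma fNorm_nonneg {N d : ℕ} (X : Matrix (Fin N) (Fin d) ℝ) : 0 ≤ fNorm X :=
  Real.sqrt_nonneg _

lemma fNorm_add_le {N d : ℕ} (A B : Matrix (Fin N) (Fin d) ℝ) :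
    fNorm (A + B) ≤ fNorm A + fNorm B := by
  have h : toEuc (A + B) = toEuc A + toEuc B := rfl
  rw [fNorm_eq, fNorm_eq, fNorm_eq, h]
  exact norm_add_le _ _

lemma fNorm_smul {N d : ℕ} (t : ℝ) (A : Matrix (Fin N) (Fin d) ℝ) :
    fNorm (t • A) = |t| * fNorm A := by
  have h : toEuc (t • A) = t • toEuc A := rfl
  rw [fNorm_eq, fNorm_eq, h, norm_smul, Real.norm_eq_abs]

variable {N d M : ℕ} (e : Fin M → Fin N → ℝ)

noncomputable def PP (w : Fin M → Fin d → ℝ) : Matrix (Fin N) (Fin d) ℝ :=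
  Matrix.of fun i j => ∑ m, e m i * w m j

lemma distM_def (X : Matrix (Fin N) (Fin d) ℝ) :
    distM e X = sInf {r : ℝ | ∃ w : Fin M → Fin d → ℝ, r = fNorm (X - PP e w)} := rfl

lemma S_nonempty (X : Matrix (Fin N) (Fin d) ℝ) :
    {r : ℝ | ∃ w : Fin M → Fin d → ℝ, r = fNorm (X - PP e w)}.Nonempty :=
  ⟨fNorm (X - PP e 0), 0, rfl⟩

lemma S_bdd (X : Matrix (Fin N) (Fin d) ℝ) :
    BddBelow {r : ℝ | ∃ w : Fin M → Fin d → ℝ, r = fNorm (X - PP e w)} :=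
  ⟨0, fun r ⟨_, hw⟩ => hw ▸ fNorm_nonneg _⟩

lemma distM_le (X : Matrix (Fin N) (Fin d) ℝ) (w : Fin M → Fin d → ℝ) :
    distM e X ≤ fNorm (X - PP e w) := by
  rw [distM_def]
  exact csInf_le (S_bdd e X) ⟨w, rfl⟩

lemma PP_add (w₁ w₂ : Fin M → Fin d → ℝ) : PP e (w₁ + w₂) = PP e w₁ + PP e w₂ := by
  ext i j
  simp [PP, mul_add, Finset.sum_add_distrib]

lemma PP_smul (t : ℝ) (w : Fin M → Fin d → ℝ) : PP e (t • w) = t • PP e w := by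
  ext i j
  simp only [PP, Pi.smul_apply, smul_eq_mul, Matrix.of_apply, Matrix.smul_apply,
    Finset.mul_sum]
  exact Finset.sum_congr rfl fun _ _ => by ring

lemma distM_add_le (A B : Matrix (Fin N) (Fin d) ℝ) :
    distM e (A + B) ≤ distM e A + distM e B := by
  rw [← sub_le_iff_le_add, distM_def e A]
  refine le_csInf (S_nonempty e A) ?_
  rintro r ⟨w₁, rfl⟩
  rw [sub_le_iff_le_add, ← sub_le_iff_le_add', distM_def e B]
  refine le_csInf (S_nonempty e B) ?_
  rintro s ⟨w₂, rfl⟩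
  rw [sub_le_iff_le_add]
  calc distM e (A + B) ≤ fNorm (A + B - PP e (w₁ + w₂)) := distM_le e _ _
    _ = fNorm ((A - PP e w₁) + (B - PP e w₂)) := by rw [PP_add]; congr 1; abel
    _ ≤ fNorm (A - PP e w₁) + fNorm (B - PP e w₂) := fNorm_add_le _ _
    _ = fNorm (B - PP e w₂) + fNorm (A - PP e w₁) := add_comm _ _

lemma distM_smul_le (t : ℝ) (A : Matrix (Fin N) (Fin d) ℝ) :
    distM e (t • A) ≤ |t| * distM e A := by
  rcases eq_or_ne t 0 with rfl | ht
  · simpa using le_trans (distM_le e 0 0) (by simp [fNorm, PP])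
  rw [distM_def e A, ← smul_eq_mul,
    ← Real.sInf_smul_of_nonneg (abs_nonneg t)]
  refine le_csInf ((S_nonempty e A).image _) ?_
  rintro b ⟨r, ⟨w, rfl⟩, rfl⟩
  have h : |t| • fNorm (A - PP e w) = fNorm (t • A - PP e (t • w)) := by
    rw [PP_smul, ← smul_sub, fNorm_smul, smul_eq_mul]
  dsimp only
  rw [h]
  exact distM_le e _ _

lemma distM_smul (t : ℝ) (ht : t ≠ 0) (A : Matrix (Fin N) (Fin d) ℝ) :
    distM e (t • A) = |t| * distM e A := by
  refine le_antisymm (distM_smul_le e t A) ?_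
  have h := distM_smul_le e t⁻¹ (t • A)
  rw [smul_smul, inv_mul_cancel₀ ht, one_smul, abs_inv] at h
  have habs : 0 < |t| := abs_pos.mpr ht
  have h2 := mul_le_mul_of_nonneg_left h (le_of_lt habs)
  rwa [← mul_assoc, mul_inv_cancel₀ (ne_of_gt habs), one_mul] at h2

lemma distM_nonneg (X : Matrix (Fin N) (Fin d) ℝ) : 0 ≤ distM e X := by
  rw [distM_def]
  refine le_csInf (S_nonempty e X) ?_
  rintro r ⟨w, rfl⟩
  exact fNorm_nonneg _

theorem skipNode_strictly_farther {N d M : ℕ} (hN : 0 < N) (hd : 0 < d)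
    (hMpos : 0 < M) (hM : M < N)
    (e : Fin M → Fin N → ℝ)
    (horth : ∀ m m' : Fin M, (∑ i, e m i * e m' i) = if m = m' then 1 else 0)
    (X X₁ : Matrix (Fin N) (Fin d) ℝ) (c : ℝ) (hc : 0 < c)
    (hX₁ : distM e X₁ ≤ c * distM e X) (hpos : 0 < distM e X₁)
    (ρ : ℝ) (hρ0 : 0 < ρ) (hρ1 : ρ < 1)
    (hcond : ρ * (1 / c + 1) > 2) :
    (ρ * (1 / c + 1) - 1 ≤ distM e ((1 - ρ) • X₁ + ρ • X) / distM e X₁ ∧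
      1 < ρ * (1 / c + 1) - 1) ∧
    distM e X₁ < distM e ((1 - ρ) • X₁ + ρ • X) := by
  set Y := (1 - ρ) • X₁ + ρ • X with hY
  have hsplit : ρ • X = Y + (-(1 - ρ)) • X₁ := by
    rw [hY]; module
  have h1 : distM e (ρ • X) ≤ distM e Y + distM e ((-(1 - ρ)) • X₁) := by
    rw [hsplit]; exact distM_add_le e _ _
  have h2 : distM e (ρ • X) = ρ * distM e X := by
    rw [distM_smul e ρ (ne_of_gt hρ0), abs_of_pos hρ0]
  have h3 : distM e ((-(1 - ρ)) • X₁) = (1 - ρ) * distM e X₁ := by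
    have h1ρ : (0:ℝ) < 1 - ρ := by linarith
    rw [distM_smul e _ (neg_ne_zero.mpr (ne_of_gt h1ρ)), abs_neg, abs_of_pos h1ρ]
  have hXge : distM e X₁ / c ≤ distM e X := by
    rw [div_le_iff₀ hc]; linarith [hX₁]
  have hkey : (ρ * (1 / c + 1) - 1) * distM e X₁ ≤ distM e Y := by
    have : ρ * distM e X ≤ distM e Y + (1 - ρ) * distM e X₁ := by
      rw [← h2, ← h3]; exact h1
    have h4 : ρ * (distM e X₁ / c) ≤ ρ * distM e X :=
      mul_le_mul_of_nonneg_left hXge (le_of_lt hρ0)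
    have hdiv : ρ * (distM e X₁ / c) = ρ * (1 / c) * distM e X₁ := by
      ring
    nlinarith [h4, this]
  have hgt1 : 1 < ρ * (1 / c + 1) - 1 := by linarith
  refine ⟨⟨?_, hgt1⟩, ?_⟩
  · rw [le_div_iff₀ hpos]; exact hkey
  · nlinarith [hkey, hpos]
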